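/- arXiv:1511.02627 — 4 statements merged into one kernel-verified Lean document; each statement's English description precedes it below -/
import Mathlib

section
/- Let A, X be d×d Hermitian matrices and f : I → ℝ a continuously differentiable function on an open interval I containing the eigenvalues of A + tX for t near t₀. Then the derivative of t ↦ Tr[f(A + tX)] at t = t₀ equals Tr[X · f'(A + t₀X)]. -/
open Matrix Polynomial Filter Topology

namespace TraceCfcAux
variable {d : ℕ}

/-! ### Trace formulas for the matrix functional calculus -/

lemma trace_mul_diagonal (N : Matrix (Fin d) (Fin d) ℂ) (v : Fin d → ℂ) :
    (N * diagonal v).trace = ∑ i, N i i * v i := by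
  simp [Matrix.trace, Matrix.diag, Matrix.mul_diagonal]

lemma trace_cfc_eq {M : Matrix (Fin d) (Fin d) ℂ} (hM : M.IsHermitian) (g : ℝ → ℝ) :
    (cfc g M).trace = ∑ i, (g (hM.eigenvalues i) : ℂ) := by
  rw [hM.cfc_eq, Matrix.IsHermitian.cfc, Unitary.conjStarAlgAut_apply]
  rw [Matrix.trace_mul_cycle]
  rw [Unitary.coe_star_mul_self, Matrix.one_mul, Matrix.trace_diagonal]
  simp

lemma trace_mul_cfc_eq (X : Matrix (Fin d) (Fin d) ℂ) {M : Matrix (Fin d) (Fin d) ℂ}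
    (hM : M.IsHermitian) (g : ℝ → ℝ) :
    (X * cfc g M).trace =
      ∑ i, (star (hM.eigenvectorUnitary : Matrix (Fin d) (Fin d) ℂ) * X *
          (hM.eigenvectorUnitary : Matrix (Fin d) (Fin d) ℂ)) i i * (g (hM.eigenvalues i) : ℂ) := by
  rw [hM.cfc_eq, Matrix.IsHermitian.cfc, Unitary.conjStarAlgAut_apply]
  rw [show X * ((hM.eigenvectorUnitary : Matrix (Fin d) (Fin d) ℂ)
      * diagonal (RCLike.ofReal ∘ g ∘ hM.eigenvalues)
      * star (hM.eigenvectorUnitary : Matrix (Fin d) (Fin d) ℂ)) =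
    (X * (hM.eigenvectorUnitary : Matrix (Fin d) (Fin d) ℂ)
      * diagonal (RCLike.ofReal ∘ g ∘ hM.eigenvalues))
      * star (hM.eigenvectorUnitary : Matrix (Fin d) (Fin d) ℂ) by noncomm_ring]
  rw [Matrix.trace_mul_comm, ← Matrix.mul_assoc, ← Matrix.mul_assoc, trace_mul_diagonal]
  simp

/-! ### Entry bounds -/

lemma unitary_entry_norm_le (U : Matrix (Fin d) (Fin d) ℂ) (hU : star U * U = 1)
    (j i : Fin d) : ‖U j i‖ ≤ 1 := by
  have h1 : (star U * U) i i = 1 := by rw [hU]; simp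
  rw [Matrix.mul_apply] at h1
  have h2 : ∑ l, ((‖U l i‖ : ℂ)^2) = 1 := by
    rw [← h1]
    refine Finset.sum_congr rfl fun l _ => ?_
    rw [Matrix.star_apply]
    rw [show (star (U l i)) = (starRingEnd ℂ) (U l i) from rfl, RCLike.conj_mul]
    norm_cast
  have h3 : ∑ l, (‖U l i‖^2 : ℝ) = 1 := by
    exact_mod_cast h2
  have h4 : ‖U j i‖^2 ≤ 1 := by
    rw [← h3]
    exact Finset.single_le_sum (fun l _ => sq_nonneg (‖U l i‖)) (Finset.mem_univ j)
  exact (pow_le_one_iff_of_nonneg (norm_nonneg _) two_ne_zero).mp h4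

lemma conj_entry_bound (U X : Matrix (Fin d) (Fin d) ℂ) (hU : star U * U = 1) (i : Fin d) :
    ‖(star U * X * U) i i‖ ≤ ∑ j, ∑ k, ‖X j k‖ := by
  rw [Matrix.mul_apply]
  refine (norm_sum_le _ _).trans ?_
  have : ∀ k : Fin d, ‖(star U * X) i k * U k i‖ ≤ ∑ j, ‖X j k‖ := by
    intro k
    rw [norm_mul, Matrix.mul_apply]
    calc ‖∑ j, star U i j * X j k‖ * ‖U k i‖
        ≤ (∑ j, ‖X j k‖) * 1 := by
          refine mul_le_mul ?_ (unitary_entry_norm_le U hU k i) (norm_nonneg _)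
            (Finset.sum_nonneg fun j _ => norm_nonneg _)
          refine (norm_sum_le _ _).trans (Finset.sum_le_sum fun j _ => ?_)
          rw [norm_mul, Matrix.star_apply, norm_star]
          calc ‖U j i‖ * ‖X j k‖ ≤ 1 * ‖X j k‖ :=
            mul_le_mul_of_nonneg_right (unitary_entry_norm_le U hU j i) (norm_nonneg _)
          _ = ‖X j k‖ := one_mul _
      _ = ∑ j, ‖X j k‖ := mul_one _
  refine (Finset.sum_le_sum fun k _ => this k).trans ?_
  rw [Finset.sum_comm]

lemma eigenvalue_bound {M : Matrix (Fin d) (Fin d) ℂ} (hM : M.IsHermitian) (i : Fin d) :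
    |hM.eigenvalues i| ≤ ∑ j, ∑ k, ‖M j k‖ := by
  have h := conj_entry_bound (hM.eigenvectorUnitary : Matrix (Fin d) (Fin d) ℂ) M
    (Unitary.coe_star_mul_self _) i
  have e : star (hM.eigenvectorUnitary : Matrix (Fin d) (Fin d) ℂ) * M
      * (hM.eigenvectorUnitary : Matrix (Fin d) (Fin d) ℂ)
      = diagonal (RCLike.ofReal ∘ hM.eigenvalues) := by
    have := hM.conjStarAlgAut_star_eigenvectorUnitary
    simpa using this
  rw [e] at h
  simpa using h

lemma mem_spectrum_iff_det {M : Matrix (Fin d) (Fin d) ℂ} {x : ℝ} :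
    x ∈ spectrum ℝ M ↔ ((x:ℂ) • (1 : Matrix (Fin d) (Fin d) ℂ) - M).det = 0 := by
  rw [spectrum.mem_iff, Matrix.isUnit_iff_isUnit_det, isUnit_iff_ne_zero, not_not]
  congr! 2
  rw [Algebra.algebraMap_eq_smul_one]
  have := algebraMap_smul (R := ℝ) (A := ℂ) (M := Matrix (Fin d) (Fin d) ℂ) x 1
  rw [← this, Complex.coe_algebraMap]

lemma smul_isHermitian {X : Matrix (Fin d) (Fin d) ℂ} (hX : X.IsHermitian) (t : ℝ) :
    (t • X).IsHermitian := by
  unfold Matrix.IsHermitian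
  rw [Matrix.conjTranspose_smul, star_trivial, hX]

/-! ### Derivatives of traces of matrix polynomials -/

section Deriv

attribute [local instance] Matrix.linftyOpNormedAddCommGroup Matrix.linftyOpNormedRing
  Matrix.linftyOpNormedAlgebra

lemma hasDerivAt_matrix (A X : Matrix (Fin d) (Fin d) ℂ) (t₀ : ℝ) :
    HasDerivAt (fun t : ℝ => A + t • X) X t₀ := by
  have := ((hasDerivAt_id t₀).smul_const X).const_add A
  rw [one_smul] at this
  exact this

lemma hasDerivAt_pow_matrix (A X : Matrix (Fin d) (Fin d) ℂ) (t₀ : ℝ) (k : ℕ) :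
    HasDerivAt (fun t : ℝ => (A + t • X)^k)
      (∑ j ∈ Finset.range k, (A + t₀ • X)^j * X * (A + t₀ • X)^(k-1-j)) t₀ := by
  induction k with
  | zero =>
    simp only [pow_zero, Finset.range_zero, Finset.sum_empty]
    exact hasDerivAt_const t₀ (1 : Matrix (Fin d) (Fin d) ℂ)
  | succ k ih =>
    have h := ih.mul (hasDerivAt_matrix A X t₀)
    have : ((fun t : ℝ => (A + t • X)^k) * fun t : ℝ => (A + t • X)) = fun t : ℝ => (A + t • X)^(k+1) := by
      funext t; rw [Pi.mul_apply, ← pow_succ]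
    rw [this] at h
    refine h.congr_deriv (Eq.symm ?_)
    rw [Finset.sum_range_succ, Finset.sum_mul]
    congr 1
    · refine Finset.sum_congr rfl fun j hj => ?_
      rw [Finset.mem_range] at hj
      rw [show k+1-1-j = (k-1-j)+1 by omega, pow_succ, ← mul_assoc]
    · simp

noncomputable def traceCLM (d : ℕ) : Matrix (Fin d) (Fin d) ℂ →L[ℝ] ℂ :=
  LinearMap.toContinuousLinearMap ((Matrix.traceLinearMap (Fin d) ℂ ℂ).restrictScalars ℝ)

@[simp] lemma traceCLM_apply (M : Matrix (Fin d) (Fin d) ℂ) : traceCLM d M = M.trace := rfl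

lemma hasDerivAt_trace_pow (A X : Matrix (Fin d) (Fin d) ℂ) (t₀ : ℝ) (k : ℕ) :
    HasDerivAt (fun t : ℝ => ((A + t • X)^(k+1)).trace)
      (((k:ℂ)+1) * (X * (A + t₀ • X)^k).trace) t₀ := by
  have h := (traceCLM d).hasFDerivAt.comp_hasDerivAt t₀ (hasDerivAt_pow_matrix A X t₀ (k+1))
  rw [show (⇑(traceCLM d) ∘ fun t : ℝ => (A + t • X) ^ (k + 1))
      = fun t : ℝ => ((A + t • X) ^ (k+1)).trace from rfl] at h
  refine h.congr_deriv (Eq.symm ?_)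
  change _ = (∑ j ∈ Finset.range (k + 1), (A + t₀ • X) ^ j * X * (A + t₀ • X) ^ (k + 1 - 1 - j)).trace
  rw [Matrix.trace_sum]
  have key : ∀ j ∈ Finset.range (k+1),
      ((A + t₀ • X)^j * X * (A + t₀ • X)^(k+1-1-j)).trace = (X * (A + t₀ • X)^k).trace := by
    intro j hj
    rw [Finset.mem_range] at hj
    rw [Matrix.trace_mul_cycle, ← pow_add, show k+1-1-j + j = k by omega, Matrix.trace_mul_comm]
  rw [Finset.sum_congr rfl key, Finset.sum_const, Finset.card_range, nsmul_eq_mul]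
  push_cast
  ring

lemma hasDerivAt_trace_aeval (A X : Matrix (Fin d) (Fin d) ℂ) (t₀ : ℝ) (p : ℝ[X]) :
    HasDerivAt (fun t : ℝ => ((aeval (A + t • X) p : Matrix (Fin d) (Fin d) ℂ)).trace)
      ((X * (aeval (A + t₀ • X) (derivative p) : Matrix (Fin d) (Fin d) ℂ)).trace) t₀ := by
  induction p using Polynomial.induction_on' with
  | add p q hp hq =>
    have h := hp.add hq
    simp only [map_add, Matrix.mul_add, Matrix.trace_add] at *
    exact h
  | monomial n c =>
    cases n with
    | zero =>
      simp only [aeval_monomial, pow_zero, mul_one, derivative_monomial, Nat.cast_zero,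
        mul_zero, Nat.zero_sub, map_zero, Matrix.mul_zero, Matrix.trace_zero]
      exact hasDerivAt_const t₀ _
    | succ n =>
      have h := (hasDerivAt_trace_pow A X t₀ n).const_smul c
      have e1 : (c • fun t : ℝ => ((A + t • X)^(n+1)).trace)
          = fun t : ℝ => ((aeval (A + t • X) (monomial (n+1) c) :
              Matrix (Fin d) (Fin d) ℂ)).trace := by
        funext t
        rw [Pi.smul_apply, aeval_monomial, Algebra.algebraMap_eq_smul_one]
        rw [smul_mul_assoc, Matrix.one_mul, Matrix.trace_smul]
      rw [e1] at h
      refine h.congr_deriv (Eq.symm ?_)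
      rw [derivative_monomial, aeval_monomial, Algebra.algebraMap_eq_smul_one]
      rw [smul_mul_assoc, Matrix.one_mul, Nat.add_sub_cancel, Matrix.mul_smul, Matrix.trace_smul]
      simp only [Complex.real_smul]
      push_cast
      ring

end Deriv

/-! ### FTC-based approximation bound -/

noncomputable def polyAntideriv (q : ℝ[X]) : ℝ[X] :=
  q.sum fun k c => C (c / (k+1)) * Polynomial.X^(k+1)

lemma derivative_polyAntideriv (q : ℝ[X]) : derivative (polyAntideriv q) = q := by
  rw [polyAntideriv, Polynomial.sum, map_sum]
  conv_rhs => rw [← Polynomial.sum_C_mul_X_pow_eq q, Polynomial.sum]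
  refine Finset.sum_congr rfl fun k hk => ?_
  rw [derivative_C_mul_X_pow, Nat.add_sub_cancel]
  congr 1
  push_cast
  field_simp

lemma eval_sub_f_bound {f : ℝ → ℝ} {I : Set ℝ} (hI : IsOpen I)
    (hf : ContDiffOn ℝ 1 f I) {a b : ℝ} (hab : a ≤ b) (hIab : Set.Icc a b ⊆ I)
    (q p : ℝ[X]) (hpq : derivative p = q) (hpa : p.eval a = f a)
    {ε : ℝ} (hq : ∀ x ∈ Set.Icc a b, |q.eval x - deriv f x| ≤ ε)
    {x : ℝ} (hx : x ∈ Set.Icc a b) : |p.eval x - f x| ≤ ε * (b - a) := by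
  have hdiff : ∀ y ∈ I, HasDerivAt f (deriv f y) y := fun y hy =>
    (((hf.differentiableOn one_ne_zero).differentiableAt (hI.mem_nhds hy)).hasDerivAt)
  have hcont : ContinuousOn (deriv f) I := hf.continuousOn_deriv_of_isOpen hI le_rfl
  have hax : Set.uIcc a x ⊆ Set.Icc a b := by
    rw [Set.uIcc_of_le hx.1]
    exact Set.Icc_subset_Icc le_rfl hx.2
  have int1 : IntervalIntegrable (fun s => q.eval s) MeasureTheory.volume a x :=
    (q.continuous_aeval.continuousOn (s := Set.uIcc a x)).intervalIntegrable
  have int2 : IntervalIntegrable (deriv f) MeasureTheory.volume a x :=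
    ((hcont.mono (hax.trans hIab))).intervalIntegrable
  have e1 : ∫ s in a..x, deriv f s = f x - f a :=
    intervalIntegral.integral_eq_sub_of_hasDerivAt
      (fun y hy => hdiff y (hIab (hax hy))) int2
  have e2 : ∫ s in a..x, q.eval s = p.eval x - p.eval a := by
    exact intervalIntegral.integral_eq_sub_of_hasDerivAt
      (fun y _ => (by simpa [hpq] using p.hasDerivAt y :
        HasDerivAt (fun s => p.eval s) (q.eval y) y)) int1
  have e3 : p.eval x - f x = ∫ s in a..x, (q.eval s - deriv f s) := by
    rw [intervalIntegral.integral_sub int1 int2, e1, e2, hpa]; ring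
  have hε : 0 ≤ ε := le_trans (abs_nonneg _) (hq a ⟨le_rfl, hab⟩)
  calc |p.eval x - f x| ≤ ε * |x - a| := by
        rw [e3]
        exact intervalIntegral.norm_integral_le_of_norm_le_const
          (fun s hs =>
            le_trans (le_of_eq (Real.norm_eq_abs _)) (hq s (hax (Set.uIoc_subset_uIcc hs))))
    _ ≤ ε * (b - a) := by
        have : |x - a| ≤ b - a := by
          rw [abs_of_nonneg (by linarith [hx.1])]; linarith [hx.2]
        exact mul_le_mul_of_nonneg_left this hε

end TraceCfcAux

open TraceCfcAux

/-- Derivative of `t ↦ Tr f(A + tX)` for Hermitian `A`, `X` and a `C¹` function `f`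
on an open interval containing the relevant spectra:
`(d/dt) Tr f(A + tX) |_{t=t₀} = Tr[X f'(A + t₀ X)]`. -/
theorem hasDerivAt_trace_cfc
    {d : ℕ} (A X : Matrix (Fin d) (Fin d) ℂ)
    (hA : A.IsHermitian) (hX : X.IsHermitian)
    (f : ℝ → ℝ) (I : Set ℝ) (hI : IsOpen I) (hIint : Convex ℝ I)
    (hf : ContDiffOn ℝ 1 f I) (t₀ : ℝ) (δ : ℝ) (hδ : 0 < δ)
    (hspec : ∀ t : ℝ, |t - t₀| < δ → spectrum ℝ (A + t • X) ⊆ I) :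
    HasDerivAt (fun t : ℝ => (cfc f (A + t • X)).trace.re)
      ((X * cfc (deriv f) (A + t₀ • X)).trace.re) t₀ := by
  classical
  rcases Nat.eq_zero_or_pos d with hd0 | hdpos
  · subst hd0
    have h1 : (fun t : ℝ => (cfc f (A + t • X)).trace.re) = fun _ => 0 := by
      funext t
      rw [show (cfc f (A + t • X)).trace = 0 from Finset.sum_of_isEmpty _]
      simp
    have h2 : (X * cfc (deriv f) (A + t₀ • X)).trace = 0 := Finset.sum_of_isEmpty _
    rw [h1, h2]
    simpa using hasDerivAt_const t₀ (0 : ℝ)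
  -- positive dimension
  haveI : Nonempty (Fin d) := Fin.pos_iff_nonempty.mp hdpos
  have hMt : ∀ t : ℝ, (A + t • X).IsHermitian := fun t => hA.add (smul_isHermitian hX t)
  set r := δ / 2 with hrdef
  have hr0 : 0 < r := by positivity
  set S : Set ℝ := Set.Icc (t₀ - r) (t₀ + r) with hSdef
  have hSδ : ∀ t ∈ S, |t - t₀| < δ := by
    intro t ht
    rw [abs_sub_lt_iff]
    refine ⟨?_, ?_⟩
    · have := ht.2; simp only [hSdef, Set.mem_Icc] at ht; linarith [ht.2]
    · simp only [hSdef, Set.mem_Icc] at ht; linarith [ht.1]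
  have ht₀S : t₀ ∈ S := by
    simp only [hSdef, Set.mem_Icc]; constructor <;> linarith
  have hballS : Metric.ball t₀ r ⊆ S := by
    intro t ht
    rw [Metric.mem_ball, Real.dist_eq, abs_sub_lt_iff] at ht
    simp only [hSdef, Set.mem_Icc]
    constructor
    · linarith [ht.2]
    · linarith [ht.1]
  set R : ℝ := (∑ j, ∑ k, ‖A j k‖) + (|t₀| + δ) * (∑ j, ∑ k, ‖X j k‖) with hRdef
  have hboundeig : ∀ t ∈ S, ∀ i, |(hMt t).eigenvalues i| ≤ R := by
    intro t ht i
    refine (eigenvalue_bound (hMt t) i).trans ?_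
    have htb : |t| ≤ |t₀| + δ := by
      have h1 := hSδ t ht
      have := abs_sub_abs_le_abs_sub t t₀
      linarith
    have h1 : ∀ j k : Fin d, ‖(A + t • X) j k‖ ≤ ‖A j k‖ + (|t₀| + δ) * ‖X j k‖ := by
      intro j k
      have he : (A + t • X) j k = A j k + t • X j k := rfl
      rw [he]
      refine (norm_add_le _ _).trans ?_
      have : ‖t • X j k‖ = |t| * ‖X j k‖ := by
        rw [norm_smul, Real.norm_eq_abs]
      rw [this]
      have : |t| * ‖X j k‖ ≤ (|t₀| + δ) * ‖X j k‖ :=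
        mul_le_mul_of_nonneg_right htb (norm_nonneg _)
      linarith
    calc ∑ j, ∑ k, ‖(A + t • X) j k‖
        ≤ ∑ j, ∑ k, (‖A j k‖ + (|t₀| + δ) * ‖X j k‖) :=
          Finset.sum_le_sum fun j _ => Finset.sum_le_sum fun k _ => h1 j k
      _ = R := by
          rw [hRdef]
          simp only [Finset.sum_add_distrib, Finset.mul_sum]
  -- the compact set of relevant spectra
  set W : Set (ℝ × ℝ) := (S ×ˢ Set.Icc (-R) R) ∩
    {p : ℝ × ℝ | (((p.2 : ℂ)) • (1 : Matrix (Fin d) (Fin d) ℂ) - (A + p.1 • X)).det = 0}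
    with hWdef
  have hWclosed2 : IsClosed {p : ℝ × ℝ |
      (((p.2:ℂ)) • (1 : Matrix (Fin d) (Fin d) ℂ) - (A + p.1 • X)).det = 0} := by
    have hcont : Continuous fun p : ℝ × ℝ =>
        (((p.2:ℂ)) • (1 : Matrix (Fin d) (Fin d) ℂ) - (A + p.1 • X)).det := by
      refine Continuous.matrix_det (Continuous.sub ?_ ?_)
      · exact (Complex.continuous_ofReal.comp continuous_snd).smul continuous_const
      · exact continuous_const.add (continuous_fst.smul continuous_const)
    exact isClosed_eq hcont continuous_const
  have hWcomp : IsCompact W := (isCompact_Icc.prod isCompact_Icc).inter_right hWclosed2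
  set K : Set ℝ := Prod.snd '' W with hKdef
  have hKcomp : IsCompact K := hWcomp.image continuous_snd
  have hmemK : ∀ t ∈ S, ∀ x ∈ spectrum ℝ (A + t • X), x ∈ K := by
    intro t ht x hx
    have hxR : x ∈ Set.Icc (-R) R := by
      have h2 := hx
      rw [(hMt t).spectrum_real_eq_range_eigenvalues] at h2
      obtain ⟨i, rfl⟩ := h2
      have := hboundeig t ht i
      rw [abs_le] at this
      exact this
    exact ⟨(t, x), ⟨Set.mk_mem_prod ht hxR, mem_spectrum_iff_det.mp hx⟩, rfl⟩
  have hKI : K ⊆ I := by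
    rintro x ⟨⟨t, x⟩, ⟨⟨htS, -⟩, hdet⟩, rfl⟩
    exact hspec t (hSδ t htS) (mem_spectrum_iff_det.mpr hdet)
  have hKne : K.Nonempty :=
    ⟨(hMt t₀).eigenvalues ⟨0, hdpos⟩,
      hmemK t₀ ht₀S _ ((hMt t₀).eigenvalues_mem_spectrum_real _)⟩
  set a : ℝ := sInf K with hadef
  set b : ℝ := sSup K with hbdef
  have haK : a ∈ K := hKcomp.sInf_mem hKne
  have hbK : b ∈ K := hKcomp.sSup_mem hKne
  have hab : a ≤ b := csInf_le_csSup hKne hKcomp.bddBelow hKcomp.bddAbove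
  have hKab : K ⊆ Set.Icc a b := fun x hx =>
    ⟨csInf_le hKcomp.bddBelow hx, le_csSup hKcomp.bddAbove hx⟩
  have habI : Set.Icc a b ⊆ I := by
    have := hIint.ordConnected
    exact this.out (hKI haK) (hKI hbK)
  have hspecIcc : ∀ t ∈ S, ∀ i, (hMt t).eigenvalues i ∈ Set.Icc a b := fun t ht i =>
    hKab (hmemK t ht _ ((hMt t).eigenvalues_mem_spectrum_real _))
  -- Weierstrass approximation of deriv f
  have hfc : ContinuousOn (deriv f) (Set.Icc a b) :=
    (hf.continuousOn_deriv_of_isOpen hI le_rfl).mono habI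
  have hWe : ∀ n : ℕ, ∃ q : ℝ[X], ∀ x ∈ Set.Icc a b,
      |q.eval x - deriv f x| ≤ 1/(n+1 : ℝ) := by
    intro n
    obtain ⟨q, hq⟩ := exists_polynomial_near_of_continuousOn a b _ hfc (1/(n+1 : ℝ))
      (by positivity)
    exact ⟨q, fun x hx => (hq x hx).le⟩
  choose q hq using hWe
  set p : ℕ → ℝ[X] :=
    fun n => polyAntideriv (q n) + C (f a - (polyAntideriv (q n)).eval a) with hpdef
  have hp' : ∀ n, derivative (p n) = q n := by
    intro n
    simp [hpdef, derivative_polyAntideriv]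
  have hpa : ∀ n, (p n).eval a = f a := by intro n; simp [hpdef]
  -- the approximating functions and their derivatives
  set F : ℕ → ℝ → ℝ :=
    fun n t => ((aeval (A + t • X) (p n) : Matrix (Fin d) (Fin d) ℂ)).trace.re with hFdef
  set F' : ℕ → ℝ → ℝ :=
    fun n t => ((X * (aeval (A + t • X) (q n) : Matrix (Fin d) (Fin d) ℂ)).trace.re)
    with hF'def
  have hF : ∀ n : ℕ, ∀ t ∈ Metric.ball t₀ r, HasDerivAt (F n) (F' n t) t := by
    intro n t _
    have h := Complex.reCLM.hasFDerivAt.comp_hasDerivAt t (hasDerivAt_trace_aeval A X t (p n))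
    rw [hp' n] at h
    exact h
  -- trace formulas
  have traceG : ∀ t : ℝ, (cfc f (A + t • X)).trace.re = ∑ i, f ((hMt t).eigenvalues i) := by
    intro t
    rw [trace_cfc_eq (hMt t) f, Complex.re_sum]
    simp
  have cfcP : ∀ (s : ℝ[X]) (t : ℝ),
      (aeval (A + t • X) s : Matrix (Fin d) (Fin d) ℂ) = cfc (fun x => s.eval x) (A + t • X) := by
    intro s t
    have h : IsSelfAdjoint (A + t • X) := hMt t
    exact (cfc_polynomial s (A + t • X) h).symm
  have traceF : ∀ n (t : ℝ), F n t = ∑ i, (p n).eval ((hMt t).eigenvalues i) := by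
    intro n t
    rw [hFdef]
    simp only []
    rw [cfcP (p n) t, trace_cfc_eq (hMt t) _, Complex.re_sum]
    simp
  -- uniform convergence of derivatives
  set CX : ℝ := ∑ j, ∑ k, ‖X j k‖ with hCXdef
  have hbound : ∀ (n : ℕ), ∀ t ∈ Metric.ball t₀ r,
      |(X * cfc (deriv f) (A + t • X)).trace.re - F' n t| ≤ (d : ℝ) * CX * (1/(n+1 : ℝ)) := by
    intro n t ht
    have htS := hballS ht
    set U : Matrix (Fin d) (Fin d) ℂ := ((hMt t).eigenvectorUnitary : Matrix (Fin d) (Fin d) ℂ)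
      with hUdef
    set lam := (hMt t).eigenvalues with hlamdef
    have hU : star U * U = 1 := Unitary.coe_star_mul_self _
    have e1 : (X * cfc (deriv f) (A + t • X)).trace
        = ∑ i, (star U * X * U) i i * (((deriv f (lam i) : ℝ) : ℂ)) :=
      trace_mul_cfc_eq X (hMt t) (deriv f)
    have e2 : (X * (aeval (A + t • X) (q n) : Matrix (Fin d) (Fin d) ℂ)).trace
        = ∑ i, (star U * X * U) i i * ((((q n).eval (lam i) : ℝ)) : ℂ) := by
      rw [cfcP (q n) t]
      exact trace_mul_cfc_eq X (hMt t) _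
    have e3 : (X * cfc (deriv f) (A + t • X)).trace.re - F' n t
        = (∑ i, (star U * X * U) i i *
            (((deriv f (lam i) : ℝ) : ℂ) - (((q n).eval (lam i) : ℝ) : ℂ))).re := by
      rw [hF'def]
      simp only []
      rw [e1, e2, ← Complex.sub_re, ← Finset.sum_sub_distrib]
      congr 1
      refine Finset.sum_congr rfl fun i _ => ?_
      ring
    rw [e3]
    calc |(∑ i, (star U * X * U) i i *
            (((deriv f (lam i) : ℝ) : ℂ) - (((q n).eval (lam i) : ℝ) : ℂ))).re|
        ≤ ‖∑ i, (star U * X * U) i i *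
            (((deriv f (lam i) : ℝ) : ℂ) - (((q n).eval (lam i) : ℝ) : ℂ))‖ := Complex.abs_re_le_norm _
      _ ≤ ∑ i, ‖(star U * X * U) i i *
            (((deriv f (lam i) : ℝ) : ℂ) - (((q n).eval (lam i) : ℝ) : ℂ))‖ := norm_sum_le _ _
      _ ≤ ∑ _i : Fin d, CX * (1/(n+1 : ℝ)) := by
          refine Finset.sum_le_sum fun i _ => ?_
          rw [norm_mul]
          have hc : ‖(star U * X * U) i i‖ ≤ CX := conj_entry_bound U X hU i
          have hd2 : ‖((deriv f (lam i) : ℝ) : ℂ) - (((q n).eval (lam i) : ℝ) : ℂ)‖ ≤ 1/(n+1 : ℝ) := by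
            rw [← Complex.ofReal_sub, Complex.norm_real, Real.norm_eq_abs, abs_sub_comm]
            exact hq n (lam i) (hspecIcc t htS i)
          exact mul_le_mul hc hd2 (norm_nonneg _) (by positivity)
      _ = (d : ℝ) * CX * (1/(n+1 : ℝ)) := by
          rw [Finset.sum_const, Finset.card_univ, Fintype.card_fin, nsmul_eq_mul]
          ring
  have hunif : TendstoUniformlyOn F'
      (fun t => (X * cfc (deriv f) (A + t • X)).trace.re) atTop (Metric.ball t₀ r) := by
    rw [Metric.tendstoUniformlyOn_iff]
    intro ε hε
    have h0 : Tendsto (fun n : ℕ => (d : ℝ) * CX * (1/(n+1 : ℝ))) atTop (𝓝 0) := by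
      have h1 : Tendsto (fun n : ℕ => 1/(n+1 : ℝ)) atTop (𝓝 0) :=
        tendsto_one_div_add_atTop_nhds_zero_nat
      simpa using h1.const_mul ((d : ℝ) * CX)
    filter_upwards [h0.eventually (gt_mem_nhds hε)] with n hn t ht
    rw [Real.dist_eq]
    exact lt_of_le_of_lt (hbound n t ht) hn
  -- pointwise convergence
  have hptF : ∀ t ∈ Metric.ball t₀ r,
      Tendsto (fun n => F n t) atTop (𝓝 ((cfc f (A + t • X)).trace.re)) := by
    intro t ht
    have htS := hballS ht
    have hb2 : ∀ n : ℕ, |F n t - (cfc f (A + t • X)).trace.re|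
        ≤ (d : ℝ) * ((1/(n+1 : ℝ)) * (b - a)) := by
      intro n
      rw [traceF n t, traceG t, ← Finset.sum_sub_distrib]
      refine (Finset.abs_sum_le_sum_abs _ _).trans ?_
      have hstep : ∀ i : Fin d, |(p n).eval ((hMt t).eigenvalues i)
          - f ((hMt t).eigenvalues i)| ≤ (1/(n+1 : ℝ)) * (b - a) := fun i =>
        eval_sub_f_bound hI hf hab habI (q n) (p n) (hp' n) (hpa n) (hq n)
          (hspecIcc t htS i)
      refine (Finset.sum_le_sum fun i _ => hstep i).trans ?_
      rw [Finset.sum_const, Finset.card_univ, Fintype.card_fin, nsmul_eq_mul]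
    have h0 : Tendsto (fun n : ℕ => (d : ℝ) * ((1/(n+1 : ℝ)) * (b - a))) atTop (𝓝 0) := by
      have h1 : Tendsto (fun n : ℕ => 1/(n+1 : ℝ)) atTop (𝓝 0) :=
        tendsto_one_div_add_atTop_nhds_zero_nat
      simpa using (h1.mul_const (b - a)).const_mul (d : ℝ)
    have h2 : Tendsto (fun n => F n t - (cfc f (A + t • X)).trace.re) atTop (𝓝 0) :=
      squeeze_zero_norm (fun n => by simpa [Real.norm_eq_abs] using hb2 n) h0
    have h3 := h2.add_const ((cfc f (A + t • X)).trace.re)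
    simpa using h3
  exact hasDerivAt_of_tendstoUniformlyOn Metric.isOpen_ball hunif
    (Filter.Eventually.of_forall hF) hptF (Metric.mem_ball_self hr0)
end

section
/- Let Ω be a finite set with probability measure μ, and let K_x (x ∈ Ω) be d×d complex matrices satisfying Σ_x μ(x) K_x K_x† = I. Then for every convex function φ : I → ℝ on an interval I and every f : Ω → M_d^sa with all spectra of f(x) in I, Tr[φ(Σ_x μ(x) K_x f(x) K_x†)] ≤ Σ_x μ(x) Tr[K_x φ(f(x)) K_x†]. -/
open Matrix

/-- Trace operator Jensen inequality for matrix-valued (unital completely positive)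
averages: if `∑ₓ μ(x) Kₓ Kₓ† = I`, then for convex `φ` on an interval `I` and
Hermitian-valued `f` with spectra in `I`,
`Tr φ(∑ₓ μ(x) Kₓ f(x) Kₓ†) ≤ ∑ₓ μ(x) Tr[Kₓ φ(f(x)) Kₓ†]`. -/
theorem trace_operator_jensen
    {Ω : Type*} [Fintype Ω] {d : ℕ}
    (μ : Ω → ℝ) (hμ : ∀ x, 0 ≤ μ x) (hμ1 : ∑ x, μ x = 1)
    (K : Ω → Matrix (Fin d) (Fin d) ℂ)
    (hK : ∑ x, μ x • (K x * (K x)ᴴ) = (1 : Matrix (Fin d) (Fin d) ℂ))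
    (I : Set ℝ) (hI : Convex ℝ I)
    (φ : ℝ → ℝ) (hφ : ConvexOn ℝ I φ) (hφc : ContinuousOn φ I)
    (f : Ω → Matrix (Fin d) (Fin d) ℂ) (hf : ∀ x, (f x).IsHermitian)
    (hspec : ∀ x, spectrum ℝ (f x) ⊆ I) :
    (cfc φ (∑ x, μ x • (K x * f x * (K x)ᴴ))).trace.re ≤
      ∑ x, μ x * (K x * cfc φ (f x) * (K x)ᴴ).trace.re := by
  classical
  set A : Matrix (Fin d) (Fin d) ℂ := ∑ x, μ x • (K x * f x * (K x)ᴴ) with hAdef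
  have hA : A.IsHermitian := by
    rw [IsHermitian, hAdef, conjTranspose_sum]
    refine Finset.sum_congr rfl fun x _ => ?_
    rw [conjTranspose_smul, star_trivial,
      (isHermitian_mul_mul_conjTranspose (K x) (hf x)).eq]
  set V : Matrix (Fin d) (Fin d) ℂ := (hA.eigenvectorUnitary : Matrix (Fin d) (Fin d) ℂ) with hVdef
  set lam : Fin d → ℝ := hA.eigenvalues with hlamdef
  set U : Ω → Matrix (Fin d) (Fin d) ℂ :=
    fun x => ((hf x).eigenvectorUnitary : Matrix (Fin d) (Fin d) ℂ) with hUdef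
  set t : Ω → Fin d → ℝ := fun x => (hf x).eigenvalues with htdef
  set M : Ω → Matrix (Fin d) (Fin d) ℂ := fun x => (U x)ᴴ * (K x)ᴴ * V with hMdef
  have hVV : Vᴴ * V = 1 := by
    rw [← star_eq_conjTranspose]; exact Unitary.coe_star_mul_self hA.eigenvectorUnitary
  have hVV' : V * Vᴴ = 1 := by
    rw [← star_eq_conjTranspose]; exact Unitary.coe_mul_star_self hA.eigenvectorUnitary
  have hUU : ∀ x, U x * (U x)ᴴ = 1 := fun x => by
    rw [← star_eq_conjTranspose]; exact Unitary.coe_mul_star_self (hf x).eigenvectorUnitary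
  -- conjugated middle terms
  have h1 : ∀ x, Vᴴ * (K x * f x * (K x)ᴴ) * V
      = (M x)ᴴ * diagonal (RCLike.ofReal ∘ t x) * M x := by
    intro x
    conv_lhs => rw [(hf x).spectral_theorem, Unitary.conjStarAlgAut_apply]
    simp only [hMdef, star_eq_conjTranspose, conjTranspose_mul, conjTranspose_conjTranspose,
      Matrix.mul_assoc]
    rfl
  have hdiag : Vᴴ * A * V = diagonal (RCLike.ofReal ∘ lam) := by
    have := hA.conjStarAlgAut_star_eigenvectorUnitary
    rw [Unitary.conjStarAlgAut_apply, Unitary.coe_star, star_star] at this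
    rw [← star_eq_conjTranspose]; exact this
  have hVAV : Vᴴ * A * V = ∑ x, μ x • ((M x)ᴴ * diagonal (RCLike.ofReal ∘ t x) * M x) := by
    rw [hAdef, Finset.mul_sum, Finset.sum_mul]
    refine Finset.sum_congr rfl fun x _ => ?_
    rw [Matrix.mul_smul, Matrix.smul_mul, h1]
  -- eigenvalue identity, complex level
  have hlamC : ∀ i, ((lam i : ℝ) : ℂ)
      = ∑ x, ∑ j, ((μ x * Complex.normSq (M x j i) * t x j : ℝ) : ℂ) := by
    intro i
    have h2 := congrFun (congrFun (hdiag.symm.trans hVAV) i) i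
    rw [diagonal_apply_eq] at h2
    rw [show ((lam i : ℝ) : ℂ) = (RCLike.ofReal ∘ lam) i from rfl, h2, Matrix.sum_apply]
    refine Finset.sum_congr rfl fun x _ => ?_
    rw [Matrix.smul_apply, Matrix.mul_assoc, Matrix.mul_apply, Finset.smul_sum]
    refine Finset.sum_congr rfl fun j _ => ?_
    simp only [Matrix.diagonal_mul, conjTranspose_apply, Function.comp_apply]
    push_cast
    rw [Complex.real_smul, Complex.star_def, Complex.normSq_eq_conj_mul_self]
    ring_nf
    simp only [RCLike.ofReal_eq_complex_ofReal]; ring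
  -- weights sum to one
  have hw1 : ∀ i, ∑ x, ∑ j, μ x * Complex.normSq (M x j i) = 1 := by
    intro i
    have hKK : Vᴴ * (∑ x, μ x • (K x * (K x)ᴴ)) * V = ∑ x, μ x • ((M x)ᴴ * M x) := by
      rw [Finset.mul_sum, Finset.sum_mul]
      refine Finset.sum_congr rfl fun x _ => ?_
      rw [Matrix.mul_smul, Matrix.smul_mul]
      congr 1
      calc Vᴴ * (K x * (K x)ᴴ) * V
          = Vᴴ * (K x * (U x * (U x)ᴴ) * (K x)ᴴ) * V := by rw [hUU x, Matrix.mul_one]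
        _ = (M x)ᴴ * M x := by
            simp only [hMdef, conjTranspose_mul, conjTranspose_conjTranspose, Matrix.mul_assoc]
    have h3 : Vᴴ * (∑ x, μ x • (K x * (K x)ᴴ)) * V = 1 := by rw [hK, Matrix.mul_one, hVV]
    have h4 := congrFun (congrFun (h3.symm.trans hKK) i) i
    rw [Matrix.one_apply_eq] at h4
    have h5 : (1 : ℂ) = ∑ x, ∑ j, ((μ x * Complex.normSq (M x j i) : ℝ) : ℂ) := by
      rw [h4, Matrix.sum_apply]
      refine Finset.sum_congr rfl fun x _ => ?_
      rw [Matrix.smul_apply, Matrix.mul_apply, Finset.smul_sum]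
      refine Finset.sum_congr rfl fun j _ => ?_
      rw [conjTranspose_apply]
      push_cast
      rw [Complex.real_smul, Complex.star_def, Complex.normSq_eq_conj_mul_self]
    exact_mod_cast h5.symm
  have hlam : ∀ i, lam i = ∑ x, ∑ j, μ x * Complex.normSq (M x j i) * t x j := by
    intro i; exact_mod_cast hlamC i
  -- trace of lhs
  have htraceL : (cfc φ A).trace = ((∑ i, φ (lam i) : ℝ) : ℂ) := by
    rw [hA.cfc_eq, Matrix.IsHermitian.cfc, Unitary.conjStarAlgAut_apply, trace_mul_cycle, star_eq_conjTranspose]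
    rw [show (hA.eigenvectorUnitary : Matrix (Fin d) (Fin d) ℂ) = V from rfl, hVV,
      Matrix.one_mul, trace_diagonal]
    push_cast
    rfl
  -- trace of rhs terms
  have htraceR : ∀ x, (K x * cfc φ (f x) * (K x)ᴴ).trace
      = ((∑ j, (∑ i, Complex.normSq (M x j i)) * φ (t x j) : ℝ) : ℂ) := by
    intro x
    rw [(hf x).cfc_eq, Matrix.IsHermitian.cfc, Unitary.conjStarAlgAut_apply]
    have hre : K x * (((hf x).eigenvectorUnitary : Matrix (Fin d) (Fin d) ℂ)
          * diagonal (RCLike.ofReal ∘ φ ∘ (hf x).eigenvalues)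
          * star ((hf x).eigenvectorUnitary : Matrix (Fin d) (Fin d) ℂ)) * (K x)ᴴ
        = (K x * U x) * diagonal (RCLike.ofReal ∘ φ ∘ t x) * ((U x)ᴴ * (K x)ᴴ) := by
      rw [star_eq_conjTranspose]
      simp only [hUdef, htdef, Matrix.mul_assoc]
    rw [hre, trace_mul_cycle]
    have h5 : (U x)ᴴ * (K x)ᴴ * (K x * U x) = M x * (M x)ᴴ := by
      calc (U x)ᴴ * (K x)ᴴ * (K x * U x)
          = (U x)ᴴ * ((K x)ᴴ * ((V * Vᴴ) * (K x * U x))) := by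
            rw [hVV', Matrix.one_mul, Matrix.mul_assoc]
        _ = M x * (M x)ᴴ := by
            simp only [hMdef, conjTranspose_mul, conjTranspose_conjTranspose, Matrix.mul_assoc]
    rw [h5, Matrix.trace]
    push_cast
    refine Finset.sum_congr rfl fun j _ => ?_
    rw [diag_apply, mul_diagonal, Matrix.mul_apply, Finset.sum_mul]
    conv_rhs => rw [Finset.sum_mul]
    refine Finset.sum_congr rfl fun i _ => ?_
    rw [conjTranspose_apply, Complex.star_def, Complex.mul_conj]
    rfl
  -- Jensen per eigenvalue
  have key : ∀ i, φ (lam i) ≤ ∑ x, ∑ j, μ x * Complex.normSq (M x j i) * φ (t x j) := by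
    intro i
    have hj := hφ.map_sum_le (t := (Finset.univ : Finset (Ω × Fin d)))
      (w := fun p => μ p.1 * Complex.normSq (M p.1 p.2 i)) (p := fun p => t p.1 p.2)
      (fun p _ => mul_nonneg (hμ p.1) (Complex.normSq_nonneg _))
      (by rw [Fintype.sum_prod_type]; exact hw1 i)
      (fun p _ => hspec p.1 ((hf p.1).eigenvalues_mem_spectrum_real p.2))
    simp only [smul_eq_mul] at hj
    calc φ (lam i)
        = φ (∑ p : Ω × Fin d, μ p.1 * Complex.normSq (M p.1 p.2 i) * t p.1 p.2) := by
          rw [hlam i, Fintype.sum_prod_type]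
      _ ≤ ∑ p : Ω × Fin d, μ p.1 * Complex.normSq (M p.1 p.2 i) * φ (t p.1 p.2) := hj
      _ = ∑ x, ∑ j, μ x * Complex.normSq (M x j i) * φ (t x j) := by
          rw [Fintype.sum_prod_type]
  -- assemble
  rw [htraceL, Complex.ofReal_re]
  have hR : ∀ x, (K x * cfc φ (f x) * (K x)ᴴ).trace.re
      = ∑ j, (∑ i, Complex.normSq (M x j i)) * φ (t x j) := fun x => by
    rw [htraceR x, Complex.ofReal_re]
  simp only [hR]
  calc ∑ i, φ (lam i)
      ≤ ∑ i, ∑ x, ∑ j, μ x * Complex.normSq (M x j i) * φ (t x j) :=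
        Finset.sum_le_sum fun i _ => key i
    _ = ∑ x, μ x * ∑ j, (∑ i, Complex.normSq (M x j i)) * φ (t x j) := by
        rw [Finset.sum_comm]
        refine Finset.sum_congr rfl fun x _ => ?_
        rw [Finset.sum_comm, Finset.mul_sum]
        refine Finset.sum_congr rfl fun j _ => ?_
        rw [← Finset.sum_mul, ← Finset.mul_sum, mul_assoc]
end

section
/- Let Ω be a finite set with probability measure μ, and suppose {P_t}_{t≥0} is a family of linear maps on functions f : Ω → M_d^sa such that P_t f(x) = Σ_y T_t(x,y)(f(y)) where each T_t(x,y) is completely positive, Σ_y T_t(x,y) is unital and trace-preserving, and μ is invariant (Σ_x μ(x) P_t f(x) = Σ_x μ(x) f(x) for all t, f). Then for every convex Φ : [0,∞) → ℝ and every f with positive semi-definite values, H_Φ(P_t f) ≤ H_Φ(f) for all t ≥ 0. -/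
open Matrix
open scoped ComplexOrder

/-- A linear map on `d × d` matrices is completely positive iff it admits a Kraus
decomposition `T(A) = ∑ᵢ Kᵢ A Kᵢ†`. -/
def IsCompletelyPositive {d : ℕ}
    (T : Matrix (Fin d) (Fin d) ℂ →ₗ[ℂ] Matrix (Fin d) (Fin d) ℂ) : Prop :=
  ∃ (m : ℕ) (K : Fin m → Matrix (Fin d) (Fin d) ℂ),
    ∀ A, T A = ∑ i, K i * A * (K i)ᴴ

/-- The matrix `Φ`-entropy `H_Φ(g) = Tr[∑ₓ μ(x) Φ(g(x)) − Φ(∑ₓ μ(x) g(x))]`. -/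
noncomputable def matrixPhiEntropy {Ω : Type*} [Fintype Ω] {d : ℕ}
    (μ : Ω → ℝ) (Φ : ℝ → ℝ) (g : Ω → Matrix (Fin d) (Fin d) ℂ) : ℝ :=
  ((∑ x, μ x • cfc Φ (g x)) - cfc Φ (∑ x, μ x • g x)).trace.re

namespace PhiEntropyAux
variable {d : ℕ}

noncomputable def dotQF (u : Fin d → ℂ) : Matrix (Fin d) (Fin d) ℂ →ₗ[ℂ] ℂ where
  toFun B := star u ⬝ᵥ (B *ᵥ u)
  map_add' A B := by simp [Matrix.add_mulVec, dotProduct_add]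
  map_smul' c A := by simp [Matrix.smul_mulVec, dotProduct_smul]

lemma dotQF_apply (u : Fin d → ℂ) (B : Matrix (Fin d) (Fin d) ℂ) :
    dotQF u B = star u ⬝ᵥ (B *ᵥ u) := rfl

lemma posSemidef_vecMulVec (v : Fin d → ℂ) : (vecMulVec v (star v)).PosSemidef := by
  refine Matrix.PosSemidef.of_dotProduct_mulVec_nonneg ?_ ?_
  · ext i j
    simp only [conjTranspose_apply, vecMulVec_apply, Pi.star_apply, star_mul', star_star]
    ring
  · intro x
    have : star x ⬝ᵥ (vecMulVec v (star v) *ᵥ x)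
        = star (star v ⬝ᵥ x) * (star v ⬝ᵥ x) := by
      simp only [dotProduct, mulVec, vecMulVec_apply, Pi.star_apply, star_sum, star_mul',
        star_star, Finset.mul_sum, Finset.sum_mul]
      rw [Finset.sum_comm]
      apply Finset.sum_congr rfl; intro i _
      apply Finset.sum_congr rfl; intro j _
      ring
    rw [this]
    exact star_mul_self_nonneg _

lemma cp_posSemidef {T : Matrix (Fin d) (Fin d) ℂ →ₗ[ℂ] Matrix (Fin d) (Fin d) ℂ}
    (hT : IsCompletelyPositive T) {A : Matrix (Fin d) (Fin d) ℂ} (hA : A.PosSemidef) :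
    (T A).PosSemidef := by
  obtain ⟨m, K, hK⟩ := hT
  rw [hK]
  exact Finset.sum_induction _ Matrix.PosSemidef (fun a b ha hb => ha.add hb)
    Matrix.PosSemidef.zero (fun i _ => hA.mul_mul_conjTranspose_same (K i))

lemma re_dotQF_nonneg {A : Matrix (Fin d) (Fin d) ℂ} (hA : A.PosSemidef) (u : Fin d → ℂ) :
    0 ≤ (dotQF u A).re := by
  have := hA.dotProduct_mulVec_nonneg u
  rw [Complex.le_def] at this
  simpa [dotQF_apply] using this.1

lemma cfc_decomp {A : Matrix (Fin d) (Fin d) ℂ} (hA : A.IsHermitian) (g : ℝ → ℝ) :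
    hA.cfc g = ∑ k, (g (hA.eigenvalues k) : ℂ) •
      vecMulVec (fun i => (hA.eigenvectorUnitary : Matrix (Fin d) (Fin d) ℂ) i k)
        (star fun i => (hA.eigenvectorUnitary : Matrix (Fin d) (Fin d) ℂ) i k) := by
  ext i j
  simp only [Matrix.IsHermitian.cfc, Unitary.conjStarAlgAut_apply, Matrix.mul_apply, Matrix.mul_diagonal, Matrix.star_apply,
    Matrix.sum_apply, Matrix.smul_apply, Matrix.vecMulVec_apply, Pi.star_apply,
    Function.comp_apply, smul_eq_mul, Matrix.diagonal_apply]
  simp only [mul_ite, mul_zero, Finset.sum_ite_eq', Finset.mem_univ, if_true]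
  exact Finset.sum_congr rfl fun k _ => by rw [mul_right_comm, mul_comm]; rfl

lemma sum_vecMulVec {A : Matrix (Fin d) (Fin d) ℂ} (hA : A.IsHermitian) :
    (∑ k, vecMulVec (fun i => (hA.eigenvectorUnitary : Matrix (Fin d) (Fin d) ℂ) i k)
        (star fun i => (hA.eigenvectorUnitary : Matrix (Fin d) (Fin d) ℂ) i k))
      = (1 : Matrix (Fin d) (Fin d) ℂ) := by
  have h : (hA.eigenvectorUnitary : Matrix (Fin d) (Fin d) ℂ)
      * star (hA.eigenvectorUnitary : Matrix (Fin d) (Fin d) ℂ) = 1 :=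
    Matrix.mem_unitaryGroup_iff.mp hA.eigenvectorUnitary.2
  ext i j
  rw [← h]
  simp [Matrix.sum_apply, vecMulVec_apply, Matrix.mul_apply, Matrix.star_apply]

lemma col_norm_one {A : Matrix (Fin d) (Fin d) ℂ} (hA : A.IsHermitian) (j : Fin d) :
    (star fun i => (hA.eigenvectorUnitary : Matrix (Fin d) (Fin d) ℂ) i j) ⬝ᵥ
      (fun i => (hA.eigenvectorUnitary : Matrix (Fin d) (Fin d) ℂ) i j) = 1 := by
  have h : star (hA.eigenvectorUnitary : Matrix (Fin d) (Fin d) ℂ)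
      * (hA.eigenvectorUnitary : Matrix (Fin d) (Fin d) ℂ) = 1 :=
    Matrix.mem_unitaryGroup_iff'.mp hA.eigenvectorUnitary.2
  have := congrFun (congrFun h j) j
  simpa [Matrix.mul_apply, Matrix.star_apply, dotProduct] using this

lemma trace_vecMulVec' (a : Fin d → ℂ) :
    (vecMulVec a (star a)).trace = star a ⬝ᵥ a := by
  simp [Matrix.trace, Matrix.diag, vecMulVec_apply, dotProduct, mul_comm]

lemma trace_eq_sum_dotQF {A : Matrix (Fin d) (Fin d) ℂ} (hA : A.IsHermitian)
    (B : Matrix (Fin d) (Fin d) ℂ) :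
    B.trace = ∑ j, dotQF (fun i => (hA.eigenvectorUnitary : Matrix (Fin d) (Fin d) ℂ) i j) B := by
  set U : Matrix (Fin d) (Fin d) ℂ := (hA.eigenvectorUnitary : Matrix (Fin d) (Fin d) ℂ) with hU
  have h : U * star U = 1 := Matrix.mem_unitaryGroup_iff.mp hA.eigenvectorUnitary.2
  have h1 : B.trace = (star U * B * U).trace := by
    rw [Matrix.trace_mul_cycle, h, Matrix.one_mul]
  rw [h1]
  simp only [Matrix.trace, Matrix.diag, Matrix.mul_apply, dotQF, LinearMap.coe_mk, AddHom.coe_mk,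
    dotProduct, mulVec, Matrix.star_apply, Pi.star_apply, Finset.sum_mul, Finset.mul_sum]
  apply Finset.sum_congr rfl; intro j _
  rw [Finset.sum_comm]
  apply Finset.sum_congr rfl; intro a _
  apply Finset.sum_congr rfl; intro i _
  ring

end PhiEntropyAux

open PhiEntropyAux in
lemma trace_jensen {d : ℕ} {ι : Type*} [Fintype ι]
    (Ψ : ι → (Matrix (Fin d) (Fin d) ℂ →ₗ[ℂ] Matrix (Fin d) (Fin d) ℂ))
    (hCP : ∀ y, IsCompletelyPositive (Ψ y))
    (hunital : (∑ y, Ψ y 1) = 1)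
    (Φ : ℝ → ℝ) (hΦ : ConvexOn ℝ (Set.Ici 0) Φ)
    (f : ι → Matrix (Fin d) (Fin d) ℂ) (hf : ∀ y, (f y).PosSemidef) :
    (cfc Φ (∑ y, Ψ y (f y))).trace.re ≤ (∑ y, Ψ y (cfc Φ (f y))).trace.re := by
  classical
  set M : Matrix (Fin d) (Fin d) ℂ := ∑ y, Ψ y (f y) with hMdef
  have hM : M.PosSemidef :=
    Finset.sum_induction _ Matrix.PosSemidef (fun a b ha hb => ha.add hb)
      Matrix.PosSemidef.zero (fun y _ => cp_posSemidef (hCP y) (hf y))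
  have hMh : M.IsHermitian := hM.1
  set u : Fin d → Fin d → ℂ :=
    fun j i => (hMh.eigenvectorUnitary : Matrix (Fin d) (Fin d) ℂ) i j with hu
  set v : ι → Fin d → Fin d → ℂ :=
    fun y k i => ((hf y).1.eigenvectorUnitary : Matrix (Fin d) (Fin d) ℂ) i k with hv
  set Q : ι → Fin d → Matrix (Fin d) (Fin d) ℂ :=
    fun y k => vecMulVec (v y k) (star (v y k)) with hQ
  set lam : Fin d → ℝ := hMh.eigenvalues with hlamdef
  set lamf : ι → Fin d → ℝ := fun y => (hf y).1.eigenvalues with hlamfdef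
  set p : Fin d → ι → Fin d → ℝ := fun j y k => (dotQF (u j) (Ψ y (Q y k))).re with hp
  have hQpsd : ∀ y k, (Q y k).PosSemidef := fun y k => posSemidef_vecMulVec _
  have hppos : ∀ j y k, 0 ≤ p j y k :=
    fun j y k => re_dotQF_nonneg (cp_posSemidef (hCP y) (hQpsd y k)) _
  have hfdecomp : ∀ y, f y = ∑ k, (lamf y k : ℂ) • Q y k := by
    intro y
    have h0 : (hf y).1.cfc (fun r : ℝ => r) = f y := by
      rw [Matrix.IsHermitian.cfc]
      exact ((hf y).1.spectral_theorem).symm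
    rw [← h0, cfc_decomp]
  have huu : ∀ j, star (u j) ⬝ᵥ u j = 1 := fun j => col_norm_one hMh j
  -- expansion of the quadratic form of M
  have hexp : ∀ j, dotQF (u j) M = ∑ y, ∑ k, (lamf y k : ℂ) * dotQF (u j) (Ψ y (Q y k)) := by
    intro j
    rw [hMdef, map_sum]
    apply Finset.sum_congr rfl; intro y _
    rw [hfdecomp y, map_sum, map_sum]
    apply Finset.sum_congr rfl; intro k _
    rw [LinearMap.map_smul, LinearMap.map_smul]
    simp [Complex.real_smul]
  -- eigenvalue identity
  have hlam : ∀ j, (lam j : ℂ) = dotQF (u j) M := by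
    intro j
    have h1 : u j = ⇑(hMh.eigenvectorBasis j) := funext fun i => hMh.eigenvectorUnitary_apply i j
    have hMu : M *ᵥ u j = (lam j : ℂ) • u j := by
      rw [h1, hMh.mulVec_eigenvectorBasis j]
      ext i
      simp [Complex.real_smul, hlamdef]
    rw [dotQF_apply, hMu, dotProduct_smul, huu j]
    simp
  have hlamr : ∀ j, lam j = ∑ y, ∑ k, p j y k * lamf y k := by
    intro j
    have := congrArg Complex.re ((hlam j).trans (hexp j))
    rw [Complex.ofReal_re] at this
    rw [this, Complex.re_sum]
    refine Finset.sum_congr rfl fun y _ => ?_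
    rw [Complex.re_sum]
    refine Finset.sum_congr rfl fun k _ => ?_
    rw [Complex.re_ofReal_mul, mul_comm]
  -- weights sum to one
  have hpsum : ∀ j, ∑ y, ∑ k, p j y k = 1 := by
    intro j
    have h2 : ∑ y, ∑ k, p j y k = (∑ y, ∑ k, dotQF (u j) (Ψ y (Q y k))).re := by
      simp [hp, Complex.re_sum]
    rw [h2]
    have h3 : (∑ y, ∑ k, dotQF (u j) (Ψ y (Q y k))) = dotQF (u j) (1 : Matrix (Fin d) (Fin d) ℂ) := by
      rw [← hunital, map_sum]
      apply Finset.sum_congr rfl; intro y _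
      rw [← map_sum, ← map_sum]
      exact congrArg (fun B => dotQF (u j) (Ψ y B)) (sum_vecMulVec (hf y).1)
    rw [h3, dotQF_apply, Matrix.one_mulVec, huu j]
    simp
  -- eigenvalues nonneg
  have hlamnn : ∀ j, lam j ∈ Set.Ici (0:ℝ) := fun j => hM.eigenvalues_nonneg j
  have hlamfnn : ∀ y k, lamf y k ∈ Set.Ici (0:ℝ) := fun y k => (hf y).eigenvalues_nonneg k
  -- Jensen per j
  have jensen : ∀ j, Φ (lam j) ≤ ∑ y, ∑ k, p j y k * Φ (lamf y k) := by
    intro j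
    have h0 : ∀ i ∈ (Finset.univ : Finset (ι × Fin d)), 0 ≤ p j i.1 i.2 :=
      fun i _ => hppos j i.1 i.2
    have h1 : ∑ i : ι × Fin d, p j i.1 i.2 = 1 := by
      rw [Fintype.sum_prod_type]; exact hpsum j
    have hmem : ∀ i ∈ (Finset.univ : Finset (ι × Fin d)), lamf i.1 i.2 ∈ Set.Ici (0:ℝ) :=
      fun i _ => hlamfnn i.1 i.2
    have := hΦ.map_sum_le h0 h1 hmem
    have heq : ∑ i : ι × Fin d, p j i.1 i.2 • lamf i.1 i.2 = lam j := by
      rw [Fintype.sum_prod_type]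
      rw [hlamr j]
      simp [smul_eq_mul]
    rw [heq] at this
    calc Φ (lam j) ≤ ∑ i : ι × Fin d, p j i.1 i.2 • Φ (lamf i.1 i.2) := this
      _ = ∑ y, ∑ k, p j y k * Φ (lamf y k) := by rw [Fintype.sum_prod_type]; simp [smul_eq_mul]
  -- LHS trace
  have hLHS : (cfc Φ M).trace.re = ∑ j, Φ (lam j) := by
    rw [hMh.cfc_eq Φ, cfc_decomp hMh Φ, Matrix.trace_sum]
    rw [Complex.re_sum]
    apply Finset.sum_congr rfl; intro j _
    rw [Matrix.trace_smul]
    have : (vecMulVec (u j) (star (u j))).trace = 1 := by rw [trace_vecMulVec', huu j]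
    rw [smul_eq_mul, this, mul_one]
    simp [hlamdef]
  -- RHS trace
  have hRHS : (∑ y, Ψ y (cfc Φ (f y))).trace.re = ∑ y, ∑ k, Φ (lamf y k) * ∑ j, p j y k := by
    have hcfcf : ∀ y, cfc Φ (f y) = ∑ k, (Φ (lamf y k) : ℂ) • Q y k := by
      intro y
      rw [(hf y).1.cfc_eq Φ, cfc_decomp (hf y).1 Φ]
    rw [Matrix.trace_sum, Complex.re_sum]
    apply Finset.sum_congr rfl; intro y _
    rw [hcfcf y, map_sum, Matrix.trace_sum, Complex.re_sum]
    apply Finset.sum_congr rfl; intro k _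
    rw [LinearMap.map_smul, Matrix.trace_smul, smul_eq_mul, Complex.re_ofReal_mul]
    congr 1
    rw [trace_eq_sum_dotQF hMh (Ψ y (Q y k)), Complex.re_sum]
  rw [hLHS, hRHS]
  calc ∑ j, Φ (lam j) ≤ ∑ j, ∑ y, ∑ k, p j y k * Φ (lamf y k) :=
        Finset.sum_le_sum (fun j _ => jensen j)
    _ = ∑ y, ∑ k, Φ (lamf y k) * ∑ j, p j y k := by
        rw [Finset.sum_comm]
        apply Finset.sum_congr rfl; intro y _
        rw [Finset.sum_comm]
        apply Finset.sum_congr rfl; intro k _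
        rw [Finset.mul_sum]
        apply Finset.sum_congr rfl; intro j _
        ring


/-- Monotonicity of the matrix `Φ`-entropy under a Markov semigroup of completely
positive, unital, trace-preserving kernels admitting `μ` as invariant measure. -/
theorem matrix_phi_entropy_monotone
    {Ω : Type*} [Fintype Ω] {d : ℕ}
    (μ : Ω → ℝ) (hμ : ∀ x, 0 ≤ μ x) (hμ1 : ∑ x, μ x = 1)
    (T : ℝ → Ω → Ω → (Matrix (Fin d) (Fin d) ℂ →ₗ[ℂ] Matrix (Fin d) (Fin d) ℂ))
    (hCP : ∀ t, 0 ≤ t → ∀ x y, IsCompletelyPositive (T t x y))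
    (hunital : ∀ t, 0 ≤ t → ∀ x,
      (∑ y, T t x y (1 : Matrix (Fin d) (Fin d) ℂ)) = 1)
    (hTP : ∀ t, 0 ≤ t → ∀ x (A : Matrix (Fin d) (Fin d) ℂ),
      (∑ y, T t x y A).trace = A.trace)
    (hinv : ∀ t, 0 ≤ t → ∀ g : Ω → Matrix (Fin d) (Fin d) ℂ,
      (∑ x, μ x • ∑ y, T t x y (g y)) = ∑ x, μ x • g x)
    (Φ : ℝ → ℝ) (hΦ : ConvexOn ℝ (Set.Ici 0) Φ)
    (f : Ω → Matrix (Fin d) (Fin d) ℂ) (hf : ∀ x, (f x).PosSemidef)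
    (t : ℝ) (ht : 0 ≤ t) :
    matrixPhiEntropy μ Φ (fun x => ∑ y, T t x y (f y)) ≤ matrixPhiEntropy μ Φ f := by
  simp only [matrixPhiEntropy]
  rw [hinv t ht f]
  rw [Matrix.trace_sub, Matrix.trace_sub, Complex.sub_re, Complex.sub_re]
  apply sub_le_sub_right
  have key : (∑ x, μ x • ∑ y, T t x y (cfc Φ (f y))) = ∑ x, μ x • cfc Φ (f x) :=
    hinv t ht (fun y => cfc Φ (f y))
  calc (∑ x, μ x • cfc Φ (∑ y, T t x y (f y))).trace.re
      = ∑ x, μ x * (cfc Φ (∑ y, T t x y (f y))).trace.re := by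
        simp [Matrix.trace_sum, Matrix.trace_smul, Complex.real_smul]
    _ ≤ ∑ x, μ x * (∑ y, T t x y (cfc Φ (f y))).trace.re := by
        apply Finset.sum_le_sum
        intro x _
        exact mul_le_mul_of_nonneg_left
          (trace_jensen (fun y => T t x y) (hCP t ht x) (hunital t ht x) Φ hΦ f hf) (hμ x)
    _ = (∑ x, μ x • ∑ y, T t x y (cfc Φ (f y))).trace.re := by
        simp [Matrix.trace_sum, Matrix.trace_smul, Complex.real_smul]
    _ = (∑ x, μ x • cfc Φ (f x)).trace.re := by rw [key]
end

section
/- For p ∈ (0,1), the function f(p) = (1/2 + p) log p + (3/2 − p) log(1 − p) is concave on (0,1) and attains its maximum value −2 log 2 at p = 1/2. -/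
/-- The function `f(p) = (1/2 + p) log p + (3/2 − p) log(1 − p)` is concave on
`(0,1)` and attains its maximum value `−2 log 2` at `p = 1/2`. -/
theorem concave_and_max_of_aux_entropy_function :
    ConcaveOn ℝ (Set.Ioo (0 : ℝ) 1)
      (fun p => (1 / 2 + p) * Real.log p + (3 / 2 - p) * Real.log (1 - p)) ∧
    ((1 / 2 + (1 / 2 : ℝ)) * Real.log (1 / 2) + (3 / 2 - (1 / 2 : ℝ)) * Real.log (1 - 1 / 2)
        = -2 * Real.log 2) ∧
    (∀ p ∈ Set.Ioo (0 : ℝ) 1,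
      (1 / 2 + p) * Real.log p + (3 / 2 - p) * Real.log (1 - p) ≤ -2 * Real.log 2) := by
  set f : ℝ → ℝ := fun p => (1 / 2 + p) * Real.log p + (3 / 2 - p) * Real.log (1 - p) with hf
  set f' : ℝ → ℝ := fun p => Real.log p - Real.log (1 - p) + (1 / 2 + p) / p
    - (3 / 2 - p) / (1 - p) with hf'
  set f'' : ℝ → ℝ := fun p => 1 / p + 1 / (1 - p) - 1 / (2 * p ^ 2)
    - 1 / (2 * (1 - p) ^ 2) with hf''
  have hint : interior (Set.Ioo (0 : ℝ) 1) = Set.Ioo (0 : ℝ) 1 := interior_Ioo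
  have hconc : ConcaveOn ℝ (Set.Ioo (0 : ℝ) 1) f := by
    apply concaveOn_of_hasDerivWithinAt2_nonpos (f' := f') (f'' := f'')
      (convex_Ioo 0 1)
    · apply ContinuousOn.add
      · exact (continuousOn_const.add continuousOn_id).mul
          (Real.continuousOn_log.mono (fun x hx => ne_of_gt hx.1))
      · exact (continuousOn_const.sub continuousOn_id).mul
          ((Real.continuousOn_log.comp (continuousOn_const.sub continuousOn_id)
            (fun x hx => by simp [sub_ne_zero]; exact ne_of_gt hx.2)))
    · rw [hint]
      intro x hx
      obtain ⟨hx0, hx1⟩ := hx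
      have hx0' : x ≠ 0 := ne_of_gt hx0
      have hx1' : (1 : ℝ) - x ≠ 0 := ne_of_gt (by linarith)
      have h1 : HasDerivAt (fun p : ℝ => (1 / 2 + p) * Real.log p)
          ((0 + 1) * Real.log x + (1 / 2 + x) * x⁻¹) x :=
        ((hasDerivAt_const x (1/2 : ℝ)).add (hasDerivAt_id x)).mul (Real.hasDerivAt_log hx0')
      have h2 : HasDerivAt (fun p : ℝ => (3 / 2 - p) * Real.log (1 - p))
          ((0 - 1) * Real.log (1 - x) + (3 / 2 - x) * ((1 - x)⁻¹ * (0 - 1))) x := by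
        have hlog : HasDerivAt (fun p : ℝ => Real.log (1 - p)) ((1 - x)⁻¹ * (0 - 1)) x :=
          (Real.hasDerivAt_log hx1').comp x ((hasDerivAt_const x (1:ℝ)).sub (hasDerivAt_id x))
        exact ((hasDerivAt_const x (3/2 : ℝ)).sub (hasDerivAt_id x)).mul hlog
      have := (h1.add h2)
      have heq : (0 + 1) * Real.log x + (1 / 2 + x) * x⁻¹
          + ((0 - 1) * Real.log (1 - x) + (3 / 2 - x) * ((1 - x)⁻¹ * (0 - 1))) = f' x := by
        simp only [hf']
        field_simp
        ring
      rw [heq] at this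
      exact this.hasDerivWithinAt
    · rw [hint]
      intro x hx
      obtain ⟨hx0, hx1⟩ := hx
      have hx0' : x ≠ 0 := ne_of_gt hx0
      have hx1' : (1 : ℝ) - x ≠ 0 := ne_of_gt (by linarith)
      have h1 : HasDerivAt Real.log x⁻¹ x := Real.hasDerivAt_log hx0'
      have h2 : HasDerivAt (fun p : ℝ => Real.log (1 - p)) ((1 - x)⁻¹ * (0 - 1)) x :=
        (Real.hasDerivAt_log hx1').comp x ((hasDerivAt_const x (1:ℝ)).sub (hasDerivAt_id x))
      have h3 : HasDerivAt (fun p : ℝ => (1 / 2 + p) / p)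
          (((0 + 1) * x - (1 / 2 + x) * 1) / x ^ 2) x :=
        ((hasDerivAt_const x (1/2 : ℝ)).add (hasDerivAt_id x)).div (hasDerivAt_id x) hx0'
      have h4 : HasDerivAt (fun p : ℝ => (3 / 2 - p) / (1 - p))
          (((0 - 1) * (1 - x) - (3 / 2 - x) * (0 - 1)) / (1 - x) ^ 2) x :=
        ((hasDerivAt_const x (3/2 : ℝ)).sub (hasDerivAt_id x)).div
          ((hasDerivAt_const x (1:ℝ)).sub (hasDerivAt_id x)) hx1'
      have := ((h1.sub h2).add h3).sub h4
      have heq : x⁻¹ - (1 - x)⁻¹ * (0 - 1) + ((0 + 1) * x - (1 / 2 + x) * 1) / x ^ 2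
          - ((0 - 1) * (1 - x) - (3 / 2 - x) * (0 - 1)) / (1 - x) ^ 2 = f'' x := by
        simp only [hf'']
        field_simp
        ring
      rw [heq] at this
      exact this.hasDerivWithinAt
    · rw [hint]
      intro x hx
      obtain ⟨hx0, hx1⟩ := hx
      have hx0' : x ≠ 0 := ne_of_gt hx0
      have hx1' : (1 : ℝ) - x ≠ 0 := ne_of_gt (by linarith)
      have key : f'' x = -(2 * x - 1) ^ 2 / (2 * x ^ 2 * (1 - x) ^ 2) := by
        simp only [hf'']
        field_simp
        ring
      rw [key]
      apply div_nonpos_of_nonpos_of_nonneg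
      · nlinarith [sq_nonneg (2 * x - 1)]
      · positivity
  have hval : f (1 / 2) = -2 * Real.log 2 := by
    simp only [hf]
    norm_num
    rw [show (1 : ℝ) / 2 = 2⁻¹ by norm_num, Real.log_inv]
    ring
  refine ⟨hconc, by rw [show ((1 / 2 + (1 / 2 : ℝ)) * Real.log (1 / 2)
    + (3 / 2 - (1 / 2 : ℝ)) * Real.log (1 - 1 / 2)) = f (1/2) by norm_num [hf]]; exact hval, ?_⟩
  intro p hp
  obtain ⟨hp0, hp1⟩ := hp
  have hp' : (1 - p) ∈ Set.Ioo (0 : ℝ) 1 := ⟨by linarith, by linarith⟩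
  have hsym : f (1 - p) = f p := by
    simp only [hf]
    rw [show (1 : ℝ) - (1 - p) = p by ring]
    ring
  have h := hconc.2 (Set.mem_Ioo.mpr ⟨hp0, hp1⟩) hp'
    (by norm_num : (0:ℝ) ≤ 1/2) (by norm_num : (0:ℝ) ≤ 1/2) (by norm_num)
  simp only [smul_eq_mul] at h
  have hmid : (1 / 2 : ℝ) * p + 1 / 2 * (1 - p) = 1 / 2 := by ring
  rw [hmid, hsym, hval] at h
  have h2 : (1:ℝ)/2 * f p + 1/2 * f p = f p := by ring
  rw [h2] at h
  exact h
end
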